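/- Let E ⊆ ℝ^k be a Borel set and f : E → ℝ^k a Lipschitz map. If f̃₁ and f̃₂ are two Lipschitz maps from ℝ^k to ℝ^k that both coincide with f on E, then their differentials agree almost everywhere on E: for L^k-a.e. x ∈ E, both f̃₁ and f̃₂ are differentiable at x and Df̃₁(x) = Df̃₂(x). -/

import Mathlib

set_option maxHeartbeats 1000000

open MeasureTheory Metric Set

/-- Let `E ⊆ ℝ^k` be Borel and `f : E → ℝ^k` Lipschitz. If `g₁, g₂` are
Lipschitz maps `ℝ^k → ℝ^k` both coinciding with `f` on `E`, then for `L^k`-a.e. `x ∈ E`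
both are differentiable at `x` with the same differential. -/
theorem stmt5 (k : ℕ) (E : Set (EuclideanSpace ℝ (Fin k))) (hE : MeasurableSet E)
    (f : E → EuclideanSpace ℝ (Fin k)) (hf : ∃ K : NNReal, LipschitzWith K f)
    (g₁ g₂ : EuclideanSpace ℝ (Fin k) → EuclideanSpace ℝ (Fin k))
    (hg₁ : ∃ K : NNReal, LipschitzWith K g₁) (hg₂ : ∃ K : NNReal, LipschitzWith K g₂)
    (hg₁f : ∀ x : E, g₁ x = f x) (hg₂f : ∀ x : E, g₂ x = f x) :
    ∀ᵐ x ∂(volume.restrict E),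
      DifferentiableAt ℝ g₁ x ∧ DifferentiableAt ℝ g₂ x ∧ fderiv ℝ g₁ x = fderiv ℝ g₂ x := by
  obtain ⟨K₁, hK₁⟩ := hg₁
  obtain ⟨K₂, hK₂⟩ := hg₂
  -- the difference map
  set h : EuclideanSpace ℝ (Fin k) → EuclideanSpace ℝ (Fin k) := fun x => g₁ x - g₂ x with hh
  have hheq : ∀ x ∈ E, h x = 0 := by
    intro x hx
    simp only [hh, hg₁f ⟨x, hx⟩, hg₂f ⟨x, hx⟩, sub_self]
  -- a.e. differentiability from Rademacher
  have hd₁ : ∀ᵐ x ∂(volume : Measure (EuclideanSpace ℝ (Fin k))), DifferentiableAt ℝ g₁ x :=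
    hK₁.ae_differentiableAt
  have hd₂ : ∀ᵐ x ∂(volume : Measure (EuclideanSpace ℝ (Fin k))), DifferentiableAt ℝ g₂ x :=
    hK₂.ae_differentiableAt
  -- the measurable set of points of E where h is differentiable
  set s : Set (EuclideanSpace ℝ (Fin k)) :=
    E ∩ {x | DifferentiableAt ℝ h x} with hs
  have hsm : MeasurableSet s := hE.inter (measurableSet_of_differentiableAt ℝ h)
  -- h approximates the zero linear map on s with precision 0
  have happrox : ApproximatesLinearOn h
      (0 : EuclideanSpace ℝ (Fin k) →L[ℝ] EuclideanSpace ℝ (Fin k)) s 0 := by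
    intro x hx y hy
    simp [hheq x hx.1, hheq y hy.1]
  have key : ∀ᵐ x ∂(volume.restrict s), ‖fderiv ℝ h x - 0‖₊ ≤ (0 : NNReal) := by
    exact happrox.norm_fderiv_sub_le volume hsm (fun x => fderiv ℝ h x)
      (fun x hx => (hx.2.hasFDerivAt).hasFDerivWithinAt)
  have key' : ∀ᵐ x ∂(volume : Measure (EuclideanSpace ℝ (Fin k))),
      x ∈ s → fderiv ℝ h x = 0 := by
    rw [← ae_restrict_iff' hsm]
    filter_upwards [key] with x hx
    have : ‖fderiv ℝ h x - 0‖₊ = 0 := le_antisymm hx zero_le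
    rw [nnnorm_eq_zero, sub_zero] at this
    exact this
  filter_upwards [ae_restrict_mem hE, ae_restrict_of_ae hd₁, ae_restrict_of_ae hd₂,
    ae_restrict_of_ae key'] with x hxE hx₁ hx₂ hkey
  refine ⟨hx₁, hx₂, ?_⟩
  have hxs : x ∈ s := ⟨hxE, hx₁.sub hx₂⟩
  have := hkey hxs
  rw [hh] at this
  rw [fderiv_fun_sub hx₁ hx₂, sub_eq_zero] at this
  exact this
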